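/- Let H be a finite-dimensional Hilbert space and (T_t)_{t≥0} a norm-continuous quantum dynamical semigroup on B(H) (unital, completely positive). Suppose there exists a state π on B(H) with π∘T_t = π for all t ≥ 0, and a function g : [0,∞) → [0,∞) with g(t) → 0 such that |(ψ − π)(T_t(A))| ≤ ‖A‖ g(t) for all states ψ, all A ∈ B(H), and all t ≥ 0. Then there exist constants c > 0, γ > 0 and a rank-one projection P on B(H)* with P(ξ) = ξ(1)·π such that the precomposition semigroup T_t' : ξ ↦ ξ∘T_t satisfies ‖T_t' − P‖ ≤ c e^{−γt} for all t ≥ 0. Conversely, if such P, c, γ exist with P rank one, then T_t' admits a state π with these properties and one may take g(t) = c e^{−γt}. -/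

import Mathlib

open scoped ComplexOrder

/-- A state on `B(H)`: a unital positive continuous linear functional. -/
def IsQState {H : Type*} [NormedAddCommGroup H] [InnerProductSpace ℂ H]
    [FiniteDimensional ℂ H] (φ : (H →L[ℂ] H) →L[ℂ] ℂ) : Prop :=
  φ 1 = 1 ∧ ∀ a : H →L[ℂ] H, 0 ≤ φ (star a * a)

section Aux

variable {H : Type*} [NormedAddCommGroup H] [InnerProductSpace ℂ H] [FiniteDimensional ℂ H]

-- hermitian lemma
lemma state_star {ψ : (H →L[ℂ] H) →L[ℂ] ℂ} (hpos : ∀ a : H →L[ℂ] H, 0 ≤ ψ (star a * a))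
    (b : H →L[ℂ] H) : ψ (star b) = starRingEnd ℂ (ψ b) := by
  have him : ∀ a : H →L[ℂ] H, (ψ (star a * a)).im = 0 := fun a => ((Complex.nonneg_iff).mp (hpos a)).2.symm
  have h1 : ((1 + star b) * (1 + b) : H →L[ℂ] H) = 1 + b + star b + star b * b := by
    noncomm_ring
  have h2 : ((1 - Complex.I • star b) * (1 + Complex.I • b) : H →L[ℂ] H)
      = 1 + Complex.I • b - Complex.I • star b + star b * b := by
    rw [sub_mul, mul_add, mul_add, one_mul, one_mul]
    rw [smul_mul_assoc, smul_mul_assoc, mul_one, mul_smul_comm, smul_smul, Complex.I_mul_I,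
      neg_one_smul]
    abel
  have e1 := him (1 + b)
  rw [show (star (1 + b) : H →L[ℂ] H) = 1 + star b by simp, h1] at e1
  have e2 := him (1 + Complex.I • b)
  rw [show (star (1 + Complex.I • b) : H →L[ℂ] H) = 1 - Complex.I • star b by
    simp [star_smul, Complex.conj_I, sub_eq_add_neg, neg_smul], h2] at e2
  have him1 : (ψ 1).im = 0 := by
    have := him 1; simpa using this
  have himb : (ψ (star b * b)).im = 0 := him b
  simp only [map_add, map_sub, map_smul, Complex.add_im, Complex.sub_im, Complex.smul_im] at e1 e2
  apply Complex.ext <;>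
    simp only [Complex.conj_re, Complex.conj_im] at *
  · have := e2
    simp [Complex.smul_im, Complex.mul_im, Complex.I_re, Complex.I_im] at this
    linarith [this]
  · linarith [e1]

lemma state_cs {ψ : (H →L[ℂ] H) →L[ℂ] ℂ} (h1 : ψ 1 = 1)
    (hpos : ∀ a : H →L[ℂ] H, 0 ≤ ψ (star a * a)) (b : H →L[ℂ] H) :
    ‖ψ b‖ ^ 2 ≤ (ψ (star b * b)).re := by
  set z := ψ b with hz
  have key := hpos (b - z • 1)
  have expand : (star (b - z • 1) * (b - z • 1) : H →L[ℂ] H)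
      = star b * b - z • star b - (starRingEnd ℂ z) • b + (starRingEnd ℂ z * z) • 1 := by
    rw [star_sub, star_smul, star_one, sub_mul, mul_sub, mul_sub, smul_mul_assoc,
      smul_mul_assoc, mul_smul_comm, mul_one, one_mul, one_mul, smul_smul]
    abel
  rw [expand] at key
  simp only [map_add, map_sub, map_smul, h1, smul_eq_mul, mul_one] at key
  rw [state_star hpos b] at key
  have : ψ (star b * b) - z * starRingEnd ℂ z - starRingEnd ℂ z * z + starRingEnd ℂ z * z
      = ψ (star b * b) - starRingEnd ℂ z * z := by ring
  rw [this] at key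
  have hre := (Complex.nonneg_iff.mp key).1
  rw [Complex.sub_re] at hre
  have : (starRingEnd ℂ z * z).re = ‖z‖ ^ 2 := by
    rw [mul_comm, Complex.mul_conj]
    simp [Complex.normSq_eq_norm_sq, ← Complex.ofReal_pow]
  linarith [hre, this.symm.le]

lemma state_posle {ψ : (H →L[ℂ] H) →L[ℂ] ℂ} (h1 : ψ 1 = 1)
    (hpos : ∀ a : H →L[ℂ] H, 0 ≤ ψ (star a * a)) (c : H →L[ℂ] H) :
    (ψ (star c * c)).re ≤ ‖(star c * c : H →L[ℂ] H)‖ := by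
  set p : H →L[ℂ] H := star c * c with hp
  have hps : star p = p := by rw [hp, star_mul, star_star]
  have aux1 : ∀ k : ℕ, 0 ≤ ψ (p ^ (2^k)) := by
    intro k
    cases k with
    | zero => simpa [hp] using hpos c
    | succ k =>
      have : p ^ (2^(k+1)) = star (p ^ (2^k)) * (p ^ (2^k)) := by
        rw [star_pow, hps, ← pow_add, pow_succ, mul_two]
      rw [this]; exact hpos _
  have habs : ∀ k : ℕ, ‖ψ (p ^ (2^k))‖ = (ψ (p ^ (2^k))).re := by
    intro k
    obtain ⟨hre, him⟩ := Complex.nonneg_iff.mp (aux1 k)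
    have : (ψ (p ^ (2^k))) = ((ψ (p ^ (2^k))).re : ℂ) := Complex.ext (Complex.ofReal_re _).symm (by simpa using him.symm)
    rw [this, Complex.norm_real, Real.norm_eq_abs, abs_of_nonneg hre, Complex.ofReal_re]
  have aux2 : ∀ k : ℕ, (ψ p).re ^ (2^k) ≤ (ψ (p ^ (2^k))).re := by
    intro k
    induction k with
    | zero => simp
    | succ k ih =>
      have h0 : 0 ≤ (ψ p).re := by
        have := Complex.nonneg_iff.mp (by simpa [hp] using hpos c : (0:ℂ) ≤ ψ p)
        exact this.1
      calc (ψ p).re ^ (2^(k+1)) = ((ψ p).re ^ (2^k))^2 := by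
            rw [← pow_mul, pow_succ]
        _ ≤ ((ψ (p ^ (2^k))).re)^2 := by
            apply pow_le_pow_left₀ (pow_nonneg h0 _) ih
        _ = ‖ψ (p ^ (2^k))‖ ^ 2 := by rw [habs]
        _ ≤ (ψ (star (p ^ (2^k)) * (p ^ (2^k)))).re := state_cs h1 hpos _
        _ = (ψ (p ^ (2^(k+1)))).re := by
            rw [star_pow, hps, ← pow_add, pow_succ, mul_two]
  by_contra hcon
  push_neg at hcon
  have hb : ∀ k : ℕ, (ψ p).re ^ (2^k) ≤ ‖ψ‖ * ‖p‖ ^ (2^k) := by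
    intro k
    calc (ψ p).re ^ (2^k) ≤ (ψ (p ^ (2^k))).re := aux2 k
      _ ≤ ‖ψ (p ^ (2^k))‖ := (habs k).ge
      _ = ‖ψ (p ^ (2^k))‖ := rfl
      _ ≤ ‖ψ‖ * ‖p ^ (2^k)‖ := ψ.le_opNorm _
      _ ≤ ‖ψ‖ * ‖p‖ ^ (2^k) := by
          exact mul_le_mul_of_nonneg_left (norm_pow_le' p (Nat.two_pow_pos k))
            (norm_nonneg ψ)
  have hp0 : 0 ≤ ‖p‖ := norm_nonneg p
  rcases eq_or_lt_of_le hp0 with h0 | h0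
  · have hpz : p = 0 := norm_le_zero_iff.mp (le_of_eq h0.symm)
    rw [hpz, map_zero, norm_zero, Complex.zero_re] at hcon
    exact lt_irrefl 0 hcon
  · set ρ := (ψ p).re / ‖p‖ with hρdef
    have hρ : 1 < ρ := (one_lt_div h0).mpr hcon
    have hbd : ∀ k : ℕ, ρ ^ (2^k) ≤ ‖ψ‖ := by
      intro k
      rw [hρdef, div_pow, div_le_iff₀ (pow_pos h0 _)]
      exact hb k
    obtain ⟨k, hk⟩ :=
      ((tendsto_pow_atTop_atTop_of_one_lt hρ).eventually_ge_atTop (‖ψ‖ + 1)).exists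
    have hmono : ρ ^ k ≤ ρ ^ (2^k) :=
      pow_le_pow_right₀ hρ.le (Nat.le_of_lt (Nat.lt_two_pow_self (n := k)))
    linarith [hbd k]

lemma state_apply_le {ψ : (H →L[ℂ] H) →L[ℂ] ℂ} (h1 : ψ 1 = 1)
    (hpos : ∀ a : H →L[ℂ] H, 0 ≤ ψ (star a * a)) (b : H →L[ℂ] H) : ‖ψ b‖ ≤ ‖b‖ := by
  have h2 := state_cs h1 hpos b
  have h3 := state_posle h1 hpos b
  have h4 : ‖(star b * b : H →L[ℂ] H)‖ = ‖b‖ * ‖b‖ := CStarRing.norm_star_mul_self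
  have hnb : ‖ψ b‖ = ‖ψ b‖ := rfl
  have ha0 : (0:ℝ) ≤ ‖ψ b‖ := norm_nonneg _
  have hb0 : (0:ℝ) ≤ ‖b‖ := norm_nonneg b
  rw [hnb]
  nlinarith [h2, h3, h4]

lemma opnorm_le_two_mul_of_inner (B : H →L[ℂ] H) {D : ℝ} (hD : 0 ≤ D)
    (h : ∀ u : H, ‖(inner ℂ u (B u) : ℂ)‖ ≤ D * ‖u‖ ^ 2) : ‖B‖ ≤ 2 * D := by
  have habs : ∀ u : H, ‖(inner ℂ (B u) u : ℂ)‖ ≤ D * ‖u‖ ^ 2 := by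
    intro u
    rw [← inner_conj_symm (B u) u]
    rw [RCLike.norm_conj]
    exact h u
  have key : ∀ x y : H, ‖(inner ℂ (B y) x : ℂ)‖ ≤ D * (‖x‖ ^ 2 + ‖y‖ ^ 2) := by
    intro x y
    have hpol := inner_map_polarization (↑B : H →ₗ[ℂ] H) x y
    simp only [ContinuousLinearMap.coe_coe] at hpol
    rw [hpol]
    have tri : ∀ z1 z2 z3 z4 : ℂ, ‖(z1 - z2 + Complex.I * z3 - Complex.I * z4) / 4‖
        ≤ (‖z1‖ + ‖z2‖ + ‖z3‖ + ‖z4‖) / 4 := by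
      intro z1 z2 z3 z4
      rw [norm_div]
      have : ‖(4:ℂ)‖ = 4 := by norm_num
      rw [this]
      gcongr ?_ / 4
      calc ‖z1 - z2 + Complex.I * z3 - Complex.I * z4‖
          ≤ ‖z1 - z2 + Complex.I * z3‖ + ‖Complex.I * z4‖ := norm_sub_le _ _
        _ ≤ (‖z1 - z2‖ + ‖Complex.I * z3‖) + ‖Complex.I * z4‖ := by
            gcongr; exact norm_add_le _ _
        _ ≤ ((‖z1‖ + ‖z2‖) + ‖Complex.I * z3‖) + ‖Complex.I * z4‖ := by
            gcongr; exact norm_sub_le _ _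
        _ = ‖z1‖ + ‖z2‖ + ‖z3‖ + ‖z4‖ := by
            simp [norm_mul, Complex.norm_I]
    refine (tri _ _ _ _).trans ?_
    have e1 := habs (x + y)
    have e2 := habs (x - y)
    have e3 := habs (x + Complex.I • y)
    have e4 := habs (x - Complex.I • y)
    have par1 : ‖x + y‖ ^ 2 + ‖x - y‖ ^ 2 = 2 * (‖x‖ ^ 2 + ‖y‖ ^ 2) := by
      have := parallelogram_law_with_norm ℂ x y
      ring_nf
      ring_nf at this
      linarith
    have par2 : ‖x + Complex.I • y‖ ^ 2 + ‖x - Complex.I • y‖ ^ 2 = 2 * (‖x‖ ^ 2 + ‖y‖ ^ 2) := by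
      have := parallelogram_law_with_norm ℂ x (Complex.I • y)
      have hIy : ‖Complex.I • y‖ = ‖y‖ := by
        rw [norm_smul, Complex.norm_I, one_mul]
      rw [hIy] at this
      ring_nf
      ring_nf at this
      linarith
    nlinarith [e1, e2, e3, e4, par1, par2]
  apply B.opNorm_le_bound (by positivity)
  intro u
  by_cases hBu : B u = 0
  · rw [hBu, norm_zero]
    positivity
  have hBu0 : 0 < ‖B u‖ := norm_pos_iff.mpr hBu
  have hu : u ≠ 0 := by
    rintro rfl
    simp at hBu
  have hu0 : 0 < ‖u‖ := norm_pos_iff.mpr hu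
  set t : ℝ := Real.sqrt (‖u‖ / ‖B u‖) with ht
  have ht0 : 0 < t := Real.sqrt_pos.mpr (div_pos hu0 hBu0)
  have ht2 : t ^ 2 = ‖u‖ / ‖B u‖ := Real.sq_sqrt (le_of_lt (div_pos hu0 hBu0))
  have hkey := key ((t : ℂ) • B u) (((t⁻¹ : ℝ) : ℂ) • u)
  have hBy : B ((((t⁻¹ : ℝ) : ℂ)) • u) = (((t⁻¹ : ℝ) : ℂ)) • B u := map_smul B _ u
  rw [hBy] at hkey
  rw [inner_smul_left, inner_smul_right] at hkey
  rw [inner_self_eq_norm_sq_to_K (𝕜 := ℂ)] at hkey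
  rw [norm_mul, norm_mul, RCLike.norm_conj, norm_pow] at hkey
  simp only [Complex.norm_real, RCLike.norm_ofReal, Real.norm_eq_abs, abs_norm, abs_of_pos ht0,
    abs_of_pos (inv_pos.mpr ht0)] at hkey
  rw [← mul_assoc, inv_mul_cancel₀ (ne_of_gt ht0), one_mul] at hkey
  have hn1 : ‖(t : ℂ) • B u‖ ^ 2 = t ^ 2 * ‖B u‖ ^ 2 := by
    rw [norm_smul, Complex.norm_real, Real.norm_eq_abs, abs_of_pos ht0, mul_pow]
  have hn2 : ‖(((t⁻¹ : ℝ) : ℂ)) • u‖ ^ 2 = (t ^ 2)⁻¹ * ‖u‖ ^ 2 := by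
    rw [norm_smul, Complex.norm_real, Real.norm_eq_abs, abs_of_pos (inv_pos.mpr ht0), mul_pow,
      inv_pow]
  rw [hn1, hn2, ht2] at hkey
  have harith : ‖u‖ / ‖B u‖ * ‖B u‖ ^ 2 + (‖u‖ / ‖B u‖)⁻¹ * ‖u‖ ^ 2 = 2 * (‖u‖ * ‖B u‖) := by
    field_simp
    ring
  rw [harith] at hkey
  -- hkey : ‖B u‖ ^ 2 ≤ D * (2 * (‖u‖ * ‖B u‖))
  have := mul_le_mul_of_nonneg_right hkey (le_of_lt (inv_pos.mpr hBu0))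
  calc ‖B u‖ = ‖B u‖ ^ 2 * ‖B u‖⁻¹ := by field_simp [pow_two]
    _ ≤ D * (2 * (‖u‖ * ‖B u‖)) * ‖B u‖⁻¹ := this
    _ = 2 * D * ‖u‖ := by field_simp

noncomputable def vecState (x : H) : (H →L[ℂ] H) →L[ℂ] ℂ :=
  LinearMap.toContinuousLinearMap
    { toFun := fun a => (inner ℂ x (a x) : ℂ)
      map_add' := by intro a b; simp [inner_add_right]
      map_smul' := by intro c a; simp [inner_smul_right] }

@[simp] lemma vecState_apply (x : H) (a : H →L[ℂ] H) : vecState x a = (inner ℂ x (a x) : ℂ) := rfl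

lemma vecState_one (x : H) (hx : ‖x‖ = 1) : vecState x 1 = 1 := by
  simp [inner_self_eq_norm_sq_to_K, hx]

lemma vecState_pos (x : H) (a : H →L[ℂ] H) : 0 ≤ vecState x (star a * a) := by
  rw [vecState_apply]
  have : ((star a * a) x) = ContinuousLinearMap.adjoint a (a x) := by
    rw [ContinuousLinearMap.star_eq_adjoint]; rfl
  rw [this, ContinuousLinearMap.adjoint_inner_right]
  rw [inner_self_eq_norm_sq_to_K (𝕜 := ℂ)]
  rw [Complex.nonneg_iff]
  constructor
  · simp [← Complex.ofReal_pow]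
  · simp [← Complex.ofReal_pow]

lemma growth_bound {E : Type*} [NormedAddCommGroup E] [NormedSpace ℂ E]
    (T : ℝ → (E →L[ℂ] E)) (hT0 : T 0 = 1)
    (hsemi : ∀ s t : ℝ, 0 ≤ s → 0 ≤ t → T (s + t) = T s ∘L T t)
    (hcont : Filter.Tendsto T (nhdsWithin 0 (Set.Ioi 0)) (nhds 1)) (b : ℝ) :
    ∃ M : ℝ, ∀ r, 0 ≤ r → r ≤ b → ‖T r‖ ≤ M := by
  obtain ⟨δ, hδ0, hδ⟩ := Metric.tendsto_nhdsWithin_nhds.mp hcont 1 one_pos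
  set C : ℝ := 1 + ‖(1 : E →L[ℂ] E)‖ with hC
  have hC1 : 1 ≤ C := by
    have h1 : (1:ℝ) ≤ ‖(1 : E →L[ℂ] E)‖ ∨ True := Or.inr trivial
    have := norm_nonneg (1 : E →L[ℂ] E)
    linarith
  have hbd : ∀ t : ℝ, 0 ≤ t → t < δ → ‖T t‖ ≤ C := by
    intro t ht htδ
    rcases eq_or_lt_of_le ht with h | h
    · rw [← h, hT0]; linarith [norm_nonneg (1 : E →L[ℂ] E)]
    · have := hδ (Set.mem_Ioi.mpr h) (by simpa [Real.dist_eq, abs_of_pos h] using htδ)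
      rw [dist_eq_norm] at this
      calc ‖T t‖ = ‖(T t - 1) + 1‖ := by rw [sub_add_cancel]
        _ ≤ ‖T t - 1‖ + ‖(1 : E →L[ℂ] E)‖ := norm_add_le _ _
        _ ≤ C := by rw [hC]; linarith
  have claim : ∀ n : ℕ, ∀ r : ℝ, 0 ≤ r → r ≤ (n+1) * (δ/2) → ‖T r‖ ≤ C^(n+1) := by
    intro n
    induction n with
    | zero =>
      intro r hr0 hr1
      have : ‖T r‖ ≤ C := hbd r hr0 (by linarith [hδ0])
      simpa using this
    | succ n ih =>
      intro r hr0 hr1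
      by_cases hcase : r ≤ (n+1) * (δ/2)
      · exact (ih r hr0 hcase).trans (pow_le_pow_right₀ hC1 (by omega))
      · push_neg at hcase
        have hr2 : 0 ≤ r - δ/2 := by
          have : (0:ℝ) < (n+1) * (δ/2) := by positivity
          nlinarith [hδ0]
        have hr3 : r - δ/2 ≤ (n+1) * (δ/2) := by push_cast at hr1 ⊢; linarith
        have hsplit : T r = T (r - δ/2) ∘L T (δ/2) := by
          rw [← hsemi (r - δ/2) (δ/2) hr2 (by linarith), sub_add_cancel]
        rw [hsplit]
        calc ‖T (r - δ/2) ∘L T (δ/2)‖ ≤ ‖T (r - δ/2)‖ * ‖T (δ/2)‖ :=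
              ContinuousLinearMap.opNorm_comp_le _ _
          _ ≤ C^(n+1) * C := by
              apply mul_le_mul (ih _ hr2 hr3) (hbd _ (by linarith) (by linarith))
                (norm_nonneg _) (by positivity)
          _ = C^(n+2) := by ring
  obtain ⟨n, hn⟩ := exists_nat_ge (b / (δ/2))
  refine ⟨C^(n+1), fun r hr0 hrb => claim n r hr0 ?_⟩
  have : b ≤ n * (δ/2) := by
    rw [div_le_iff₀ (by linarith : (0:ℝ) < δ/2)] at hn
    linarith
  have : (n:ℝ) * (δ/2) ≤ (n+1) * (δ/2) := by nlinarith [hδ0]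
  linarith

lemma exp_decay {E : Type*} [NormedAddCommGroup E] [NormedSpace ℂ E]
    (Dm : ℝ → (E →L[ℂ] E))
    (hmul : ∀ s t : ℝ, 0 ≤ s → 0 ≤ t → Dm (s + t) = Dm s ∘L Dm t)
    {t₀ M : ℝ} (ht₀ : 0 < t₀) (hhalf : ‖Dm t₀‖ ≤ 1/2)
    (hM : ∀ r, 0 ≤ r → r ≤ t₀ → ‖Dm r‖ ≤ M) :
    ∀ t, 0 ≤ t → ‖Dm t‖ ≤ (2*M) * Real.exp (-(Real.log 2 / t₀) * t) := by
  have hM0 : 0 ≤ M := le_trans (norm_nonneg _) (hM 0 le_rfl ht₀.le)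
  have key : ∀ m : ℕ, ∀ r : ℝ, 0 ≤ r → r ≤ t₀ → ‖Dm (m * t₀ + r)‖ ≤ (1/2)^m * M := by
    intro m
    induction m with
    | zero => intro r hr0 hr1; simpa using hM r hr0 hr1
    | succ m ih =>
      intro r hr0 hr1
      have heq : ((m:ℝ)+1) * t₀ + r = t₀ + ((m:ℝ) * t₀ + r) := by ring
      have hsum : Dm (((m:ℝ)+1) * t₀ + r) = Dm t₀ ∘L Dm ((m:ℝ) * t₀ + r) := by
        rw [heq, hmul t₀ ((m:ℝ) * t₀ + r) ht₀.le (by positivity)]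
      push_cast
      rw [hsum]
      calc ‖Dm t₀ ∘L Dm ((m:ℝ) * t₀ + r)‖ ≤ ‖Dm t₀‖ * ‖Dm ((m:ℝ) * t₀ + r)‖ :=
            ContinuousLinearMap.opNorm_comp_le _ _
        _ ≤ (1/2) * ((1/2)^m * M) := by
            apply mul_le_mul hhalf (ih r hr0 hr1) (norm_nonneg _) (by norm_num)
        _ = (1/2)^(m+1) * M := by ring
  intro t ht
  set n := Nat.floor (t / t₀) with hn
  have hdiv0 : 0 ≤ t / t₀ := div_nonneg ht ht₀.le
  have hn1 : (n:ℝ) * t₀ ≤ t := by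
    rw [← le_div_iff₀ ht₀]
    exact Nat.floor_le hdiv0
  have hn2 : t < ((n:ℝ)+1) * t₀ := by
    rw [← div_lt_iff₀ ht₀]
    exact Nat.lt_floor_add_one _
  have hbound := key n (t - n * t₀) (by linarith) (by linarith)
  rw [show (n:ℝ) * t₀ + (t - n * t₀) = t by ring] at hbound
  have hlog2 : (0:ℝ) < Real.log 2 := Real.log_pos (by norm_num)
  have hexp : ((1:ℝ)/2)^n ≤ 2 * Real.exp (-(Real.log 2 / t₀) * t) := by
    have h12 : ((1:ℝ)/2)^n = Real.exp (-(n:ℝ) * Real.log 2) := by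
      rw [show -(n:ℝ) * Real.log 2 = (n:ℝ) * Real.log (1/2) by
        rw [Real.log_div one_ne_zero (by norm_num), Real.log_one]; ring]
      rw [Real.exp_nat_mul, Real.exp_log (by norm_num : (0:ℝ) < 1/2)]
    rw [h12, show (2:ℝ) * Real.exp (-(Real.log 2 / t₀) * t)
        = Real.exp (Real.log 2 + -(Real.log 2 / t₀) * t) from by
      rw [Real.exp_add, Real.exp_log two_pos]]
    apply Real.exp_le_exp.mpr
    have : Real.log 2 / t₀ * t ≤ ((n:ℝ)+1) * Real.log 2 := by
      rw [div_mul_eq_mul_div, div_le_iff₀ ht₀]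
      calc Real.log 2 * t ≤ Real.log 2 * (((n:ℝ)+1) * t₀) := by nlinarith
        _ = ((n:ℝ)+1) * Real.log 2 * t₀ := by ring
    linarith
  calc ‖Dm t‖ ≤ (1/2)^n * M := hbound
    _ ≤ (2 * Real.exp (-(Real.log 2 / t₀) * t)) * M := by
        apply mul_le_mul_of_nonneg_right hexp hM0
    _ = (2*M) * Real.exp (-(Real.log 2 / t₀) * t) := by ring

end Aux

set_option maxHeartbeats 2000000 in
/-- Let `H` be a finite-dimensional Hilbert space and `(T_t)_{t≥0}` a
norm-continuous quantum dynamical semigroup on `B(H)` (unital, positive). There exists an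
invariant state `π` together with a function `g → 0` such that
`|(ψ − π)(T_t A)| ≤ ‖A‖ g t` for all states `ψ`, operators `A` and `t ≥ 0`, if and only if
there exist a state `π`, invariant under the dynamics, and constants `c > 0`, `γ > 0` such
that the precomposition semigroup `T_t' : ξ ↦ ξ ∘ T_t` satisfies `‖T_t' − P‖ ≤ c e^{-γt}`,
where `P` is the rank-one projection `P ξ = ξ(1) π` on `B(H)*` (the operator-norm bound is
expressed as `‖ξ ∘ T_t − ξ(1) π‖ ≤ c e^{-γt} ‖ξ‖` for all `ξ ∈ B(H)*`); in that case one
may take `g t = c e^{-γt}`. -/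
theorem dynamical_fixed_point_iff_exponential_convergence
    {H : Type*} [NormedAddCommGroup H] [InnerProductSpace ℂ H] [FiniteDimensional ℂ H]
    (T : ℝ → ((H →L[ℂ] H) →L[ℂ] (H →L[ℂ] H)))
    (hT0 : T 0 = 1)
    (hsemi : ∀ s t : ℝ, 0 ≤ s → 0 ≤ t → T (s + t) = T s ∘L T t)
    (hcont : Filter.Tendsto T (nhdsWithin 0 (Set.Ioi 0)) (nhds 1))
    (hunital : ∀ t : ℝ, 0 ≤ t → T t 1 = 1)
    (hpos : ∀ t : ℝ, 0 ≤ t → ∀ a : H →L[ℂ] H, a.IsPositive → (T t a).IsPositive) :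
    (∃ π : (H →L[ℂ] H) →L[ℂ] ℂ, IsQState π ∧
      (∀ t : ℝ, 0 ≤ t → ∀ A : H →L[ℂ] H, π (T t A) = π A) ∧
      ∃ g : ℝ → ℝ, Filter.Tendsto g Filter.atTop (nhds 0) ∧
        ∀ ψ : (H →L[ℂ] H) →L[ℂ] ℂ, IsQState ψ →
          ∀ A : H →L[ℂ] H, ∀ t : ℝ, 0 ≤ t →
            ‖ψ (T t A) - π (T t A)‖ ≤ ‖A‖ * g t) ↔
    (∃ π : (H →L[ℂ] H) →L[ℂ] ℂ, IsQState π ∧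
      (∀ t : ℝ, 0 ≤ t → ∀ A : H →L[ℂ] H, π (T t A) = π A) ∧
      ∃ c : ℝ, 0 < c ∧ ∃ γ : ℝ, 0 < γ ∧
        ∀ t : ℝ, 0 ≤ t → ∀ ξ : (H →L[ℂ] H) →L[ℂ] ℂ,
          ‖ξ.comp (T t) - ξ 1 • π‖ ≤ c * Real.exp (-γ * t) * ‖ξ‖) := by
  constructor
  · rintro ⟨π, hπ, hinv, g, hg, hest⟩
    have hone : (1 : H →L[ℂ] H) ≠ 0 := by
      intro h
      have h1 := hπ.1
      rw [h, map_zero] at h1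
      exact one_ne_zero h1.symm
    have hnt : Nontrivial H := by
      by_contra hns
      rw [not_nontrivial_iff_subsingleton] at hns
      exact hone (Subsingleton.elim _ _)
    have hg0 : ∀ t, 0 ≤ t → 0 ≤ g t := by
      intro t ht
      have h := hest π hπ 1 t ht
      have hn1 : ‖(1 : H →L[ℂ] H)‖ = 1 := norm_one
      rw [sub_self, norm_zero, hn1, one_mul] at h
      exact h
    set S : (H →L[ℂ] H) →L[ℂ] (H →L[ℂ] H) := π.smulRight 1 with hSdef
    have hSapp : ∀ A : H →L[ℂ] H, S A = π A • 1 := fun A => rfl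
    -- key operator norm estimate
    have hD : ∀ t, 0 ≤ t → ‖T t - S‖ ≤ 2 * g t := by
      intro t ht
      apply ContinuousLinearMap.opNorm_le_bound _ (by
        have := hg0 t ht; positivity)
      intro A
      rw [ContinuousLinearMap.sub_apply, hSapp]
      have hB : ‖T t A - π A • 1‖ ≤ 2 * (‖A‖ * g t) := by
        apply opnorm_le_two_mul_of_inner _ (by have := hg0 t ht; positivity)
        intro u
        by_cases hu : u = 0
        · simp [hu]
        · have hu0 : 0 < ‖u‖ := norm_pos_iff.mpr hu
          set v : H := (‖u‖⁻¹ : ℂ) • u with hv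
          have hvn : ‖v‖ = 1 := by
            rw [hv, norm_smul]
            simp [norm_inv, Real.norm_eq_abs, abs_of_pos hu0, inv_mul_cancel₀ (ne_of_gt hu0)]
          have hψ : IsQState (vecState v) := ⟨vecState_one v hvn, vecState_pos v⟩
          have hest' := hest (vecState v) hψ A t ht
          rw [hinv t ht A] at hest'
          have hval : (inner ℂ u ((T t A - π A • 1) u) : ℂ)
              = (‖u‖^2 : ℝ) • (vecState v (T t A) - π A) := by
            rw [ContinuousLinearMap.sub_apply, inner_sub_right]
            rw [vecState_apply]
            have h1 : (T t A) v = (‖u‖⁻¹ : ℂ) • (T t A) u := map_smul _ _ _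
            rw [hv, h1, inner_smul_left, inner_smul_right]
            rw [ContinuousLinearMap.smul_apply, ContinuousLinearMap.one_apply,
              inner_smul_right, inner_self_eq_norm_sq_to_K (𝕜 := ℂ)]
            rw [map_inv₀, Complex.conj_ofReal, Complex.real_smul]
            push_cast
            field_simp
            rfl
          rw [hval]
          rw [norm_smul]
          have hnn : ‖((‖u‖:ℝ)^2)‖ = ‖u‖^2 := by
            rw [Real.norm_eq_abs]
            exact abs_of_nonneg (sq_nonneg (‖u‖))
          rw [hnn]
          have habs : ‖vecState v (T t A) - π A‖ ≤ ‖A‖ * g t := by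
            exact hest'
          calc ‖u‖^2 * ‖vecState v (T t A) - π A‖ ≤ ‖u‖^2 * (‖A‖ * g t) := by
                apply mul_le_mul_of_nonneg_left habs (sq_nonneg _)
            _ = ‖A‖ * g t * ‖u‖^2 := by ring
      calc ‖T t A - π A • 1‖ ≤ 2 * (‖A‖ * g t) := hB
        _ = 2 * g t * ‖A‖ := by ring
    -- semigroup property of D
    have hTS : ∀ t, 0 ≤ t → (T t) ∘L S = S := by
      intro t ht
      ext A
      simp only [ContinuousLinearMap.comp_apply, hSapp, map_smul, hunital t ht]
    have hST : ∀ t, 0 ≤ t → S ∘L (T t) = S := by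
      intro t ht
      ext A
      simp only [ContinuousLinearMap.comp_apply, hSapp, hinv t ht]
    have hSS : S ∘L S = S := by
      ext A
      simp only [ContinuousLinearMap.comp_apply, hSapp, map_smul, smul_eq_mul, hπ.1, smul_smul,
        mul_one]
    have hDm : ∀ s t : ℝ, 0 ≤ s → 0 ≤ t →
        (T (s + t) - S) = (T s - S) ∘L (T t - S) := by
      intro s t hs htt
      rw [ContinuousLinearMap.sub_comp, ContinuousLinearMap.comp_sub,
        ContinuousLinearMap.comp_sub, ← hsemi s t hs htt, hTS s hs, hST t htt, hSS]
      abel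
    -- choose t₀
    have hev : ∀ᶠ x in Filter.atTop, g x < 1/4 :=
      Filter.Tendsto.eventually_lt_const (by norm_num : (0:ℝ) < 1/4) hg
    obtain ⟨t₀, hgt₀, ht₀1⟩ := (hev.and (Filter.eventually_ge_atTop 1)).exists
    have ht₀pos : (0:ℝ) < t₀ := lt_of_lt_of_le one_pos ht₀1
    have hhalf : ‖T t₀ - S‖ ≤ 1/2 := by
      have := hD t₀ ht₀pos.le
      linarith
    obtain ⟨MT, hMT⟩ := growth_bound T hT0 hsemi hcont t₀
    set M : ℝ := MT + ‖S‖ with hM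
    have hMb : ∀ r, 0 ≤ r → r ≤ t₀ → ‖T r - S‖ ≤ M := by
      intro r h1 h2
      have h3 : ‖T r - S‖ ≤ ‖T r‖ + ‖S‖ :=
        norm_sub_le (E := (H →L[ℂ] H) →L[ℂ] (H →L[ℂ] H)) (T r) S
      linarith [hMT r h1 h2]
    have hdec := exp_decay (fun t => T t - S)
      (fun s t hs ht => by exact hDm s t hs ht) ht₀pos hhalf hMb
    set γ : ℝ := Real.log 2 / t₀ with hγdef
    have hγpos : 0 < γ := div_pos (Real.log_pos (by norm_num)) ht₀pos
    have hMT0 : (0:ℝ) ≤ MT := le_trans (norm_nonneg _) (hMT 0 le_rfl ht₀pos.le)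
    have hS0 : (0:ℝ) ≤ ‖S‖ := norm_nonneg (E := (H →L[ℂ] H) →L[ℂ] (H →L[ℂ] H)) S
    have hM0 : (0:ℝ) ≤ M := by rw [hM]; linarith
    refine ⟨π, hπ, hinv, 2*M + 1, by linarith, γ, hγpos, ?_⟩
    intro t ht ξ
    have hcomp : ξ.comp (T t) - ξ 1 • π = ξ.comp (T t - S) := by
      ext A
      simp only [ContinuousLinearMap.sub_apply, ContinuousLinearMap.comp_apply,
        ContinuousLinearMap.smul_apply, hSapp, map_sub, map_smul, smul_eq_mul]
      ring
    rw [hcomp]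
    have hd : ‖T t - S‖ ≤ (2*M) * Real.exp (-(Real.log 2 / t₀) * t) := hdec t ht
    calc ‖ξ.comp (T t - S)‖ ≤ ‖ξ‖ * ‖T t - S‖ := ContinuousLinearMap.opNorm_comp_le _ _
      _ ≤ ‖ξ‖ * ((2*M) * Real.exp (-(Real.log 2 / t₀) * t)) :=
          mul_le_mul_of_nonneg_left hd (norm_nonneg ξ)
      _ ≤ (2*M + 1) * Real.exp (-γ * t) * ‖ξ‖ := by
          rw [hγdef]
          have he : (0:ℝ) < Real.exp (-(Real.log 2 / t₀) * t) := Real.exp_pos _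
          nlinarith [norm_nonneg ξ, he]
  · rintro ⟨π, hπ, hinv, c, hc, γ, hγ, hbound⟩
    refine ⟨π, hπ, hinv, fun t => c * Real.exp (-γ * t), ?_, ?_⟩
    · have h1 : Filter.Tendsto (fun t : ℝ => γ * t) Filter.atTop Filter.atTop :=
        Filter.Tendsto.const_mul_atTop hγ Filter.tendsto_id
      have h2 : Filter.Tendsto (fun t : ℝ => -(γ * t)) Filter.atTop Filter.atBot :=
        Filter.tendsto_neg_atTop_atBot.comp h1
      have h3 : Filter.Tendsto (fun t : ℝ => Real.exp (-(γ * t))) Filter.atTop (nhds 0) :=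
        Real.tendsto_exp_atBot.comp h2
      have h4 := h3.const_mul c
      simpa [neg_mul, mul_zero] using h4
    · intro ψ hψ A t ht
      have hψnorm : ‖ψ‖ ≤ 1 := by
        apply ContinuousLinearMap.opNorm_le_bound _ zero_le_one
        intro b
        rw [one_mul]
        exact state_apply_le hψ.1 hψ.2 b
      have hb := hbound t ht ψ
      have happ : ψ (T t A) - π (T t A) = (ψ.comp (T t) - ψ 1 • π) A := by
        simp only [ContinuousLinearMap.sub_apply, ContinuousLinearMap.comp_apply,
          ContinuousLinearMap.smul_apply, hψ.1, one_smul, hinv t ht A]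
      rw [happ]
      have he : (0:ℝ) ≤ Real.exp (-γ * t) := (Real.exp_pos _).le
      calc ‖(ψ.comp (T t) - ψ 1 • π) A‖ ≤ ‖ψ.comp (T t) - ψ 1 • π‖ * ‖A‖ :=
            ContinuousLinearMap.le_opNorm _ _
        _ ≤ (c * Real.exp (-γ * t) * ‖ψ‖) * ‖A‖ := by
            apply mul_le_mul_of_nonneg_right hb (norm_nonneg _)
        _ ≤ (c * Real.exp (-γ * t)) * ‖A‖ := by
            apply mul_le_mul_of_nonneg_right _ (norm_nonneg A)
            exact mul_le_of_le_one_right (mul_nonneg hc.le he) hψnorm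
        _ = ‖A‖ * (c * Real.exp (-γ * t)) := mul_comm _ _
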